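/- Let ω = (−1+√3 i)/2 and, for λ ∈ ℂ ∖ {0, 1, −ω²}, set N(λ) = 3√3 i · λ(1−λ)/(λ+ω²)³. Then for every λ ∈ ℂ ∖ {0, 1, −ω²}, both 1 − 1/λ and 1/(1−λ) again lie in ℂ ∖ {0, 1, −ω²}, and N(1 − 1/λ) = N(λ) and N(1/(1−λ)) = N(λ); that is, N is invariant under the order-three map σ(λ) = 1 − 1/λ. -/

import Mathlib

open Complex

/-- `ω = (−1 + √3 i)/2`, the primitive cube root of unity in the upper half-plane. -/
noncomputable def omegaC : ℂ := (-1 + Real.sqrt 3 * Complex.I) / 2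

/-- The rational function `N(λ) = 3√3 i λ(1−λ)/(λ+ω²)³`. -/
noncomputable def Nfn (l : ℂ) : ℂ :=
  3 * Real.sqrt 3 * Complex.I * (l * (1 - l)) / (l + omegaC ^ 2) ^ 3

lemma sqrt3_sq : ((Real.sqrt 3 : ℝ) : ℂ)^2 = 3 := by
  rw [← Complex.ofReal_pow, Real.sq_sqrt (by norm_num)]; norm_num

lemma omegaC_sum : omegaC ^ 2 + omegaC + 1 = 0 := by
  unfold omegaC
  linear_combination (Complex.I^2/4) * sqrt3_sq + ((3:ℂ)/4) * Complex.I_sq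

/-- `N` is invariant under the order-three map `σ(λ) = 1 − 1/λ`. -/
theorem N_sigma_invariant (l : ℂ) (h0 : l ≠ 0) (h1 : l ≠ 1) (h2 : l ≠ -omegaC ^ 2) :
    (1 - 1/l ≠ 0 ∧ 1 - 1/l ≠ 1 ∧ 1 - 1/l ≠ -omegaC ^ 2) ∧
    (1/(1 - l) ≠ 0 ∧ 1/(1 - l) ≠ 1 ∧ 1/(1 - l) ≠ -omegaC ^ 2) ∧
    Nfn (1 - 1/l) = Nfn l ∧ Nfn (1/(1 - l)) = Nfn l := by
  have h1' : (1:ℂ) - l ≠ 0 := sub_ne_zero.mpr (Ne.symm h1)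
  have hd : l + omegaC^2 ≠ 0 := fun h => h2 (eq_neg_of_add_eq_zero_left h)
  have hA3 : 1 - 1/l + omegaC^2 ≠ 0 := by
    intro h; apply h2
    have h' : 1 - 1/l = -omegaC^2 := eq_neg_of_add_eq_zero_left h
    field_simp at h'
    linear_combination (-omegaC^2) * h' + l*(omegaC^2 - omegaC + 1) * omegaC_sum
  have hB3 : 1/(1 - l) + omegaC^2 ≠ 0 := by
    intro h; apply h2
    have h' : 1/(1 - l) = -omegaC^2 := eq_neg_of_add_eq_zero_left h
    field_simp [h1'] at h'
    linear_combination (-omegaC) * h' + ((1-l)*(omegaC-1)+1) * omegaC_sum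
  refine ⟨⟨?_, ?_, fun h => hA3 (by rw [h]; ring)⟩,
    ⟨one_div_ne_zero h1', ?_, fun h => hB3 (by rw [h]; ring)⟩, ?_, ?_⟩
  · intro h
    apply h1
    field_simp at h
    linear_combination h
  · intro h
    apply h0
    have : (1:ℂ)/l = 0 := by linear_combination -h
    simpa using this
  · intro h
    apply h0
    field_simp [h1'] at h
    linear_combination h
  · rw [Nfn, Nfn, div_eq_div_iff (pow_ne_zero 3 hA3) (pow_ne_zero 3 hd)]
    field_simp
    linear_combination (
      (1:ℂ)*l^0*omegaC^0 + (-1:ℂ)*l^0*omegaC^1 + (1:ℂ)*l^0*omegaC^3 + (-1:ℂ)*l^0*omegaC^4 + (-4:ℂ)*l^1*omegaC^0 + (4:ℂ)*l^1*omegaC^1 + (-3:ℂ)*l^1*omegaC^2 + (-1:ℂ)*l^1*omegaC^3 + (1:ℂ)*l^1*omegaC^4 + (6:ℂ)*l^2*omegaC^0 + (-6:ℂ)*l^2*omegaC^1 + (6:ℂ)*l^2*omegaC^2 + (-5:ℂ)*l^3*omegaC^0 + (5:ℂ)*l^3*omegaC^1 + (-6:ℂ)*l^3*omegaC^2 + (1:ℂ)*l^3*omegaC^3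 + (-1:ℂ)*l^3*omegaC^4 + (2:ℂ)*l^4*omegaC^0 + (-2:ℂ)*l^4*omegaC^1 + (3:ℂ)*l^4*omegaC^2 + (-1:ℂ)*l^4*omegaC^3 + (1:ℂ)*l^4*omegaC^4) * omegaC_sum
  · rw [Nfn, Nfn, div_eq_div_iff (pow_ne_zero 3 hB3) (pow_ne_zero 3 hd)]
    field_simp
    linear_combination (
      (-1:ℂ)*l^1*omegaC^0 + (1:ℂ)*l^1*omegaC^1 + (-3:ℂ)*l^1*omegaC^2 + (2:ℂ)*l^1*omegaC^3 + (-2:ℂ)*l^1*omegaC^4 + (3:ℂ)*l^2*omegaC^2 + (-3:ℂ)*l^2*omegaC^3 + (3:ℂ)*l^2*omegaC^4 + (-3:ℂ)*l^3*omegaC^2 + (3:ℂ)*l^3*omegaC^3 + (-3:ℂ)*l^3*omegaC^4 + (-1:ℂ)*l^4*omegaC^0 + (1:ℂ)*l^4*omegaC^1 + (-1:ℂ)*l^4*omegaC^3 + (1:ℂ)*l^4*omegaC^4) * omegaC_sum
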